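/- arXiv:1511.06986 — 7 statements merged into one kernel-verified Lean document; each statement's English description precedes it below -/
import Mathlib

section
/- Let p be a prime and let a, b, c, d ∈ ℤ_p be the entries of a matrix in GL₂(ℤ_p) (i.e., ad − bc is a unit in ℤ_p). Then the set {(a·x + b·y)/(c·x + d·y) ∈ ℚ_p : x, y ∈ ℤ_p^×, c·x + d·y ≠ 0} is infinite. -/
/-- Lemma B.4: for `(a b; c d) ∈ GL₂(ℤ_p)`, the set of values `(ax+by)/(cx+dy)` in `ℚ_p`,
as `x, y` range over units of `ℤ_p`, is infinite. -/
theorem stmt_2 (p : ℕ) [Fact p.Prime] (a b c d : ℤ_[p]) (h : IsUnit (a * d - b * c)) :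
    {z : ℚ_[p] | ∃ x y : ℤ_[p], IsUnit x ∧ IsUnit y ∧ c * x + d * y ≠ 0 ∧
      z = (↑(a * x + b * y) : ℚ_[p]) / (↑(c * x + d * y) : ℚ_[p])}.Infinite := by
  set f : ℤ_[p] → ℚ_[p] :=
    fun t => ((a * t + b : ℤ_[p]) : ℚ_[p]) / ((c * t + d : ℤ_[p]) : ℚ_[p]) with hf
  set S : Set ℤ_[p] := {t | IsUnit t ∧ c * t + d ≠ 0} with hSdef
  have hdet : (a * d - b * c) ≠ 0 := h.ne_zero
  -- units form an infinite set
  have hU : {t : ℤ_[p] | IsUnit t}.Infinite := by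
    apply Set.infinite_of_injective_forall_mem (f := fun n : ℕ => (1 + (p : ℤ_[p]) * n))
    · intro m n hmn
      simp only [add_right_inj] at hmn
      have hp : (p : ℤ_[p]) ≠ 0 := by
        exact_mod_cast Nat.cast_ne_zero.mpr (Fact.out (p := p.Prime)).ne_zero
      have := mul_left_cancel₀ hp hmn
      exact_mod_cast this
    · intro n
      have hnorm : ‖(p : ℤ_[p]) * (n : ℤ_[p])‖ < 1 := by
        calc ‖(p : ℤ_[p]) * (n : ℤ_[p])‖ ≤ ‖(p : ℤ_[p])‖ * 1 := by
              apply le_trans (norm_mul_le _ _)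
              exact mul_le_mul_of_nonneg_left (PadicInt.norm_le_one _) (norm_nonneg _)
          _ < 1 := by
              rw [mul_one, PadicInt.norm_p]
              have := (Fact.out (p := p.Prime)).one_lt
              rw [inv_lt_one_iff₀]
              right; exact_mod_cast this
      have : ‖(1 + (p : ℤ_[p]) * n : ℤ_[p])‖ = 1 := by
        have h1 : ‖(1 : ℤ_[p])‖ = 1 := norm_one
        calc ‖(1 + (p : ℤ_[p]) * n : ℤ_[p])‖ = ‖(1 : ℤ_[p])‖ := by
              apply PadicInt.norm_add_eq_max_of_ne (by rw [h1]; exact ne_of_gt hnorm) |>.trans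
              · rw [max_eq_left (le_of_lt (by rw [h1]; exact hnorm))]
          _ = 1 := h1
      exact PadicInt.isUnit_iff.mpr this
  -- bad set where denominator vanishes is finite
  have hbad : {t : ℤ_[p] | c * t + d = 0}.Finite := by
    by_cases hc : c = 0
    · have hd : d ≠ 0 := by
        intro hd0
        apply hdet; rw [hc, hd0]; ring
      convert Set.finite_empty
      ext t; simp [hc, hd]
    · apply Set.Subsingleton.finite
      intro t ht s hs
      have : c * t = c * s := by
        have ht' : c * t + d = 0 := ht
        have hs' : c * s + d = 0 := hs
        have h1 : c * t = -d := by linear_combination ht'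
        have h2 : c * s = -d := by linear_combination hs'
        rw [h1, h2]
      exact mul_left_cancel₀ hc this
  have hS : S.Infinite := by
    apply Set.Infinite.mono (s := {t : ℤ_[p] | IsUnit t} \ {t | c * t + d = 0})
    · intro t ht
      exact ⟨ht.1, ht.2⟩
    · exact hU.diff hbad
  -- f is injective on S
  have hinj : S.InjOn f := by
    intro t ht s hs hfts
    have hdt : ((c * t + d : ℤ_[p]) : ℚ_[p]) ≠ 0 := by
      intro h0; exact ht.2 (PadicInt.coe_eq_zero.mp h0)
    have hds : ((c * s + d : ℤ_[p]) : ℚ_[p]) ≠ 0 := by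
      intro h0; exact hs.2 (PadicInt.coe_eq_zero.mp h0)
    rw [hf, div_eq_div_iff hdt hds] at hfts
    have hQ : ((a * t + b) * (c * s + d) : ℤ_[p]) = ((a * s + b) * (c * t + d) : ℤ_[p]) := by
      have : (((a * t + b) * (c * s + d) : ℤ_[p]) : ℚ_[p])
          = (((a * s + b) * (c * t + d) : ℤ_[p]) : ℚ_[p]) := by push_cast; exact hfts
      exact Subtype.coe_injective this
    have key : (a * d - b * c) * t = (a * d - b * c) * s := by
      linear_combination hQ
    exact mul_left_cancel₀ hdet key
  apply Set.Infinite.mono (s := f '' S)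
  · rintro z ⟨t, ht, rfl⟩
    exact ⟨t, 1, ht.1, isUnit_one, by simpa using ht.2, by simp [hf]⟩
  · exact hS.image hinj
end

section
/- Let p be a prime, let W be a free ℤ_p-module of finite rank d ≥ 1, let 𝔇 be a finite collection of free rank-(d−1) direct summands of W, and let W₀ be their union. Let W₁, W₂ ∈ 𝔇 and suppose v₁, v₂ ∈ W ∖ W₀ satisfy W₁ + ℤ_p·v₁ = W = W₂ + ℤ_p·v₂ (with W₁ ∩ ℤ_p·v₁ = 0 and W₂ ∩ ℤ_p·v₂ = 0). Then there exist α, β ∈ ℤ_p such that the element v = α·v₁ + β·v₂ satisfies: (a) v ∈ W ∖ W₀, and (b) W₁ + ℤ_p·v = W = W₂ + ℤ_p·v. -/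
open Module Submodule

section Aux

variable {p : ℕ} [Fact p.Prime]

private lemma aux_p_nonunit : ¬ IsUnit (p : ℤ_[p]) := by
  rw [PadicInt.not_isUnit_iff, PadicInt.norm_p]
  rw [inv_lt_one₀ (by exact_mod_cast (Fact.out : p.Prime).pos)]
  exact_mod_cast (Fact.out : p.Prime).one_lt

private lemma aux_p_ne_zero : (p : ℤ_[p]) ≠ 0 :=
  Nat.cast_ne_zero.mpr (Fact.out : p.Prime).ne_zero

private lemma aux_nonunit_add {x y : ℤ_[p]} (hx : ¬ IsUnit x) (hy : ¬ IsUnit y) :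
    ¬ IsUnit (x + y) := by
  have h := (IsLocalRing.maximalIdeal ℤ_[p]).add_mem
    ((IsLocalRing.mem_maximalIdeal x).2 hx) ((IsLocalRing.mem_maximalIdeal y).2 hy)
  exact (IsLocalRing.mem_maximalIdeal _).1 h

private lemma aux_unit_add_nonunit {x y : ℤ_[p]} (hx : IsUnit x) (hy : ¬ IsUnit y) :
    IsUnit (x + y) := by
  by_contra h
  have h2 := (IsLocalRing.maximalIdeal ℤ_[p]).sub_mem
    ((IsLocalRing.mem_maximalIdeal _).2 h) ((IsLocalRing.mem_maximalIdeal y).2 hy)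
  rw [add_sub_cancel_right] at h2
  exact (IsLocalRing.mem_maximalIdeal x).1 h2 hx

private lemma aux_nonunit_p_mul (x : ℤ_[p]) : ¬ IsUnit ((p : ℤ_[p]) * x) :=
  fun h => aux_p_nonunit (isUnit_of_mul_isUnit_left h)

/-- A corank-one direct summand is the kernel of a surjective functional. -/
private lemma aux_exists_functional {W : Type*} [AddCommGroup W] [Module ℤ_[p] W]
    [Module.Free ℤ_[p] W] [Module.Finite ℤ_[p] W] {d : ℕ} (hd : 1 ≤ d)
    (hW : finrank ℤ_[p] W = d) (W' : Submodule ℤ_[p] W)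
    (hcompl : ∃ W'' : Submodule ℤ_[p] W, IsCompl W' W'')
    (hfree : Module.Free ℤ_[p] W') (hrank : finrank ℤ_[p] W' = d - 1) :
    ∃ f : W →ₗ[ℤ_[p]] ℤ_[p], LinearMap.ker f = W' ∧ Function.Surjective f := by
  obtain ⟨W'', hc⟩ := hcompl
  haveI : IsNoetherian ℤ_[p] W := isNoetherian_of_isNoetherianRing_of_finite ℤ_[p] W
  haveI : Module.Finite ℤ_[p] W' := Module.Finite.iff_fg.mpr (IsNoetherian.noetherian _)
  haveI : Module.Finite ℤ_[p] W'' := Module.Finite.iff_fg.mpr (IsNoetherian.noetherian _)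
  haveI := hfree
  have hrk : finrank ℤ_[p] W'' = 1 := by
    have e := (Submodule.prodEquivOfIsCompl W' W'' hc).finrank_eq
    rw [Module.finrank_prod, hW, hrank] at e
    omega
  set ι := Module.Free.ChooseBasisIndex ℤ_[p] W''
  have hcard : Fintype.card ι = 1 := by
    rw [← Module.finrank_eq_card_chooseBasisIndex, hrk]
  obtain ⟨i, hi⟩ := Fintype.card_eq_one_iff.mp hcard
  set b := Module.Free.chooseBasis ℤ_[p] W''
  set π := Submodule.linearProjOfIsCompl W'' W' hc.symm
  refine ⟨(b.coord i).comp π, ?_, ?_⟩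
  · ext x
    rw [LinearMap.mem_ker, LinearMap.comp_apply]
    constructor
    · intro h
      have hz : b.repr (π x) = 0 := by
        ext j
        rw [hi j]
        simpa using h
      have hπ : π x = 0 := by
        have := congrArg b.repr.symm hz
        simpa using this
      exact (Submodule.linearProjOfIsCompl_apply_eq_zero_iff hc.symm).mp hπ
    · intro h
      have hπ : π x = 0 := (Submodule.linearProjOfIsCompl_apply_eq_zero_iff hc.symm).mpr h
      rw [hπ]
      simp
  · intro c
    refine ⟨((c • b i : W'') : W), ?_⟩
    rw [LinearMap.comp_apply]
    have : π ((c • b i : W'') : W) = c • b i :=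
      Submodule.linearProjOfIsCompl_apply_left hc.symm (c • b i)
    rw [this]
    simp [Basis.coord_apply, Basis.repr_self]

private lemma aux_sup_span_eq_top {W : Type*} [AddCommGroup W] [Module ℤ_[p] W]
    (f : W →ₗ[ℤ_[p]] ℤ_[p]) (W₁ : Submodule ℤ_[p] W) (hker : LinearMap.ker f = W₁)
    (v : W) (hv : IsUnit (f v)) : W₁ ⊔ Submodule.span ℤ_[p] {v} = ⊤ := by
  obtain ⟨u, hu⟩ := hv
  rw [eq_top_iff]
  intro x _
  rw [Submodule.mem_sup]
  refine ⟨x - (f x * ↑u⁻¹) • v, ?_, (f x * ↑u⁻¹) • v,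
    Submodule.smul_mem _ _ (Submodule.mem_span_singleton_self v), by abel⟩
  rw [← hker, LinearMap.mem_ker, map_sub, map_smul, smul_eq_mul, ← hu]
  have : (↑u⁻¹ : ℤ_[p]) * ↑u = 1 := u.inv_mul
  calc f x - f x * ↑u⁻¹ * ↑u = f x - f x * (↑u⁻¹ * ↑u) := by ring
    _ = 0 := by rw [this, mul_one, sub_self]

private lemma aux_isUnit_of_sup {W : Type*} [AddCommGroup W] [Module ℤ_[p] W]
    (f : W →ₗ[ℤ_[p]] ℤ_[p]) (W₁ : Submodule ℤ_[p] W) (hker : LinearMap.ker f = W₁)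
    (hsurj : Function.Surjective f) (v : W)
    (hsup : W₁ ⊔ Submodule.span ℤ_[p] {v} = ⊤) : IsUnit (f v) := by
  have h1 : Submodule.map f ⊤ = ⊤ := by
    rw [Submodule.map_top, LinearMap.range_eq_top.mpr hsurj]
  rw [← hsup, Submodule.map_sup, Submodule.map_span, Set.image_singleton] at h1
  have h2 : Submodule.map f W₁ = ⊥ := by
    rw [eq_bot_iff]
    rintro y ⟨x, hx, rfl⟩
    rw [← hker] at hx
    simpa using hx
  rw [h2, bot_sup_eq] at h1
  exact Ideal.span_singleton_eq_top.mp h1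

private lemma aux_exists_param {W : Type*} [AddCommGroup W] [Module ℤ_[p] W]
    (D : Finset (Submodule ℤ_[p] W)) (g h : Submodule ℤ_[p] W → ℤ_[p])
    (hh : ∀ W' ∈ D, h W' ≠ 0) :
    ∃ t : ℤ_[p], ∀ W' ∈ D, g W' + t * h W' ≠ 0 := by
  classical
  set bad : Submodule ℤ_[p] W → ℤ_[p] :=
    fun W' => if hc : ∃ s, g W' + s * h W' = 0 then hc.choose else 0 with hbad
  obtain ⟨t, ht⟩ := Infinite.exists_notMem_finset (D.image bad)
  refine ⟨t, fun W' hW' h0 => ht ?_⟩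
  have hex : ∃ s, g W' + s * h W' = 0 := ⟨t, h0⟩
  have h1 : g W' + hex.choose * h W' = 0 := hex.choose_spec
  have hteq : t = bad W' := by
    rw [hbad]
    simp only [dif_pos hex]
    have h3 : (t - hex.choose) * h W' = 0 := by
      have := sub_eq_zero.mpr (h0.trans h1.symm)
      calc (t - hex.choose) * h W' = (g W' + t * h W') - (g W' + hex.choose * h W') := by ring
        _ = 0 := by rw [h0, h1, sub_zero]
    rcases mul_eq_zero.mp h3 with h4 | h4
    · exact sub_eq_zero.mp h4
    · exact absurd h4 (hh W' hW')
  exact Finset.mem_image.mpr ⟨W', hW', hteq.symm⟩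

end Aux

/-- Lemma B.6: given two members `W₁, W₂` of a finite collection `D` of free rank-`(d-1)`
direct summands, and `v₁, v₂ ∉ ⋃ D` with `W₁ ⊕ ℤ_p·v₁ = W = W₂ ⊕ ℤ_p·v₂`, there are
`α, β ∈ ℤ_p` such that `v = α·v₁ + β·v₂` avoids `⋃ D` and `W₁ + ℤ_p·v = W = W₂ + ℤ_p·v`. -/
theorem stmt_3 (p : ℕ) [Fact p.Prime] (d : ℕ) (hd : 1 ≤ d)
    (W : Type*) [AddCommGroup W] [Module ℤ_[p] W]
    [Module.Free ℤ_[p] W] [Module.Finite ℤ_[p] W]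
    (hW : Module.finrank ℤ_[p] W = d)
    (D : Finset (Submodule ℤ_[p] W))
    (hD : ∀ W' ∈ D, (∃ W'' : Submodule ℤ_[p] W, IsCompl W' W'') ∧
      Module.Free ℤ_[p] W' ∧ Module.finrank ℤ_[p] W' = d - 1)
    (W₁ W₂ : Submodule ℤ_[p] W) (hW₁ : W₁ ∈ D) (hW₂ : W₂ ∈ D)
    (v₁ v₂ : W)
    (hv₁ : ∀ W' ∈ D, v₁ ∉ W') (hv₂ : ∀ W' ∈ D, v₂ ∉ W')
    (h₁ : W₁ ⊔ Submodule.span ℤ_[p] {v₁} = ⊤)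
    (h₁' : W₁ ⊓ Submodule.span ℤ_[p] {v₁} = ⊥)
    (h₂ : W₂ ⊔ Submodule.span ℤ_[p] {v₂} = ⊤)
    (h₂' : W₂ ⊓ Submodule.span ℤ_[p] {v₂} = ⊥) :
    ∃ α β : ℤ_[p],
      (∀ W' ∈ D, α • v₁ + β • v₂ ∉ W') ∧
      W₁ ⊔ Submodule.span ℤ_[p] {α • v₁ + β • v₂} = ⊤ ∧
      W₂ ⊔ Submodule.span ℤ_[p] {α • v₁ + β • v₂} = ⊤ := by
  classical
  have hfun : ∀ W' ∈ D, ∃ f : W →ₗ[ℤ_[p]] ℤ_[p],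
      LinearMap.ker f = W' ∧ Function.Surjective f := fun W' hW' =>
    aux_exists_functional hd hW W' (hD W' hW').1 (hD W' hW').2.1 (hD W' hW').2.2
  choose! f hker hsurj using hfun
  set a : Submodule ℤ_[p] W → ℤ_[p] := fun W' => f W' v₁ with ha_def
  set b : Submodule ℤ_[p] W → ℤ_[p] := fun W' => f W' v₂ with hb_def
  have ha : ∀ W' ∈ D, a W' ≠ 0 := fun W' h h0 =>
    hv₁ W' h (by rw [← hker W' h]; exact LinearMap.mem_ker.mpr h0)
  have hb : ∀ W' ∈ D, b W' ≠ 0 := fun W' h h0 =>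
    hv₂ W' h (by rw [← hker W' h]; exact LinearMap.mem_ker.mpr h0)
  have hu₁ : IsUnit (a W₁) :=
    aux_isUnit_of_sup (f W₁) W₁ (hker W₁ hW₁) (hsurj W₁ hW₁) v₁ h₁
  have hu₂ : IsUnit (b W₂) :=
    aux_isUnit_of_sup (f W₂) W₂ (hker W₂ hW₂) (hsurj W₂ hW₂) v₂ h₂
  suffices hab : ∃ α β : ℤ_[p], (∀ W' ∈ D, α * a W' + β * b W' ≠ 0) ∧
      IsUnit (α * a W₁ + β * b W₁) ∧ IsUnit (α * a W₂ + β * b W₂) by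
    obtain ⟨α, β, hne, hA, hB⟩ := hab
    have hval : ∀ W', f W' (α • v₁ + β • v₂) = α * a W' + β * b W' := fun W' => by
      rw [map_add, map_smul, map_smul, smul_eq_mul, smul_eq_mul, ha_def, hb_def]
    refine ⟨α, β, fun W' hW' hmem => hne W' hW' ?_, ?_, ?_⟩
    · rw [← hval W']
      exact LinearMap.mem_ker.mp (by rw [hker W' hW']; exact hmem)
    · exact aux_sup_span_eq_top (f W₁) W₁ (hker W₁ hW₁) _ (by rw [hval W₁]; exact hA)
    · exact aux_sup_span_eq_top (f W₂) W₂ (hker W₂ hW₂) _ (by rw [hval W₂]; exact hB)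
  by_cases hA' : IsUnit (a W₂)
  · -- α = 1, β = p t
    obtain ⟨t, ht⟩ := aux_exists_param D a (fun W' => (p : ℤ_[p]) * b W')
      (fun W' h => mul_ne_zero aux_p_ne_zero (hb W' h))
    refine ⟨1, (p : ℤ_[p]) * t, fun W' hW' => by
      have := ht W' hW'; intro h0; apply this; rw [← h0]; ring, ?_, ?_⟩
    · have : (1 : ℤ_[p]) * a W₁ + (p : ℤ_[p]) * t * b W₁
          = a W₁ + (p : ℤ_[p]) * (t * b W₁) := by ring
      rw [this]
      exact aux_unit_add_nonunit hu₁ (aux_nonunit_p_mul _)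
    · have : (1 : ℤ_[p]) * a W₂ + (p : ℤ_[p]) * t * b W₂
          = a W₂ + (p : ℤ_[p]) * (t * b W₂) := by ring
      rw [this]
      exact aux_unit_add_nonunit hA' (aux_nonunit_p_mul _)
  · by_cases hB : IsUnit (b W₁)
    · -- α = p t, β = 1
      obtain ⟨t, ht⟩ := aux_exists_param D b (fun W' => (p : ℤ_[p]) * a W')
        (fun W' h => mul_ne_zero aux_p_ne_zero (ha W' h))
      refine ⟨(p : ℤ_[p]) * t, 1, fun W' hW' => by
        have := ht W' hW'; intro h0; apply this; rw [← h0]; ring, ?_, ?_⟩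
      · have : (p : ℤ_[p]) * t * a W₁ + 1 * b W₁
            = b W₁ + (p : ℤ_[p]) * (t * a W₁) := by ring
        rw [this]
        exact aux_unit_add_nonunit hB (aux_nonunit_p_mul _)
      · have : (p : ℤ_[p]) * t * a W₂ + 1 * b W₂
            = b W₂ + (p : ℤ_[p]) * (t * a W₂) := by ring
        rw [this]
        exact aux_unit_add_nonunit hu₂ (aux_nonunit_p_mul _)
    · -- α = 1, β = 1 + p t
      obtain ⟨t, ht⟩ := aux_exists_param D (fun W' => a W' + b W')
        (fun W' => (p : ℤ_[p]) * b W')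
        (fun W' h => mul_ne_zero aux_p_ne_zero (hb W' h))
      refine ⟨1, 1 + (p : ℤ_[p]) * t, fun W' hW' => by
        have := ht W' hW'; intro h0; apply this; rw [← h0]; ring, ?_, ?_⟩
      · have : (1 : ℤ_[p]) * a W₁ + (1 + (p : ℤ_[p]) * t) * b W₁
            = a W₁ + (b W₁ + (p : ℤ_[p]) * (t * b W₁)) := by ring
        rw [this]
        exact aux_unit_add_nonunit hu₁ (aux_nonunit_add hB (aux_nonunit_p_mul _))
      · have : (1 : ℤ_[p]) * a W₂ + (1 + (p : ℤ_[p]) * t) * b W₂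
            = b W₂ + (a W₂ + (p : ℤ_[p]) * (t * b W₂)) := by ring
        rw [this]
        exact aux_unit_add_nonunit hu₂ (aux_nonunit_add hA' (aux_nonunit_p_mul _))
end

section
/- Let p be a prime, let W be a free ℤ_p-module of finite rank d ≥ 1, let 𝔇 be a finite collection of free rank-(d−1) direct summands of W, let W₀ be their union, and let W' ∈ 𝔇. Then there exists v ∈ W ∖ W₀ such that W' + ℤ_p·v = W. -/
open Module Submodule

section Aux
variable {p : ℕ} [Fact p.Prime]

theorem aux_avoid {M : Type*} [AddCommGroup M] [Module ℤ_[p] M]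
    (S : Finset ((M →ₗ[ℤ_[p]] ℤ_[p]) × ℤ_[p]))
    (hS : ∀ q ∈ S, q.1 ≠ 0) :
    ∃ m : M, ∀ q ∈ S, q.1 m ≠ q.2 := by
  classical
  induction S using Finset.induction_on with
  | empty => exact ⟨0, fun q hq => absurd hq (Finset.notMem_empty q)⟩
  | @insert q S hqS ih =>
    obtain ⟨m, hm⟩ := ih fun r hr => hS r (Finset.mem_insert_of_mem hr)
    have hq1 : q.1 ≠ 0 := hS q (Finset.mem_insert_self q S)
    obtain ⟨z, hz⟩ : ∃ z, q.1 z ≠ 0 := by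
      by_contra h; push_neg at h; exact hq1 (LinearMap.ext fun x => h x)
    have key : ∀ r : (M →ₗ[ℤ_[p]] ℤ_[p]) × ℤ_[p], r ∈ insert q S →
        {t : ℤ_[p] | r.1 m + t * r.1 z = r.2}.Finite := by
      intro r hr
      rcases eq_or_ne (r.1 z) 0 with h0 | h0
      · have hrS : r ∈ S := by
          rcases Finset.mem_insert.mp hr with rfl | hr'
          · exact absurd h0 hz
          · exact hr'
        have : {t : ℤ_[p] | r.1 m + t * r.1 z = r.2} = ∅ := by
          ext t; simp [h0, hm r hrS]
        simp [this]
      · apply Set.Subsingleton.finite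
        intro t1 h1 t2 h2
        have h3 : t1 * r.1 z = t2 * r.1 z := by
          have := h1.trans (h2.symm : r.2 = r.1 m + t2 * r.1 z)
          exact add_left_cancel this
        exact mul_right_cancel₀ h0 h3
    have hbad : (⋃ r ∈ (insert q S : Finset _),
        {t : ℤ_[p] | r.1 m + t * r.1 z = r.2}).Finite :=
      Set.Finite.biUnion (Finset.finite_toSet _) key
    obtain ⟨t, ht⟩ := hbad.infinite_compl.nonempty
    refine ⟨m + t • z, fun r hr hcon => ?_⟩
    apply ht
    refine Set.mem_biUnion hr ?_
    simpa [mul_comm] using hcon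

theorem aux_compl {W : Type*} [AddCommGroup W] [Module ℤ_[p] W]
    [Module.Free ℤ_[p] W] [Module.Finite ℤ_[p] W] {d : ℕ} (hd : 1 ≤ d)
    (hW : Module.finrank ℤ_[p] W = d)
    {P Q : Submodule ℤ_[p] W} (hPQ : IsCompl P Q)
    (hP : Module.finrank ℤ_[p] P = d - 1) :
    Nonempty (Q ≃ₗ[ℤ_[p]] ℤ_[p]) := by
  haveI : IsNoetherian ℤ_[p] W := isNoetherian_of_isNoetherianRing_of_finite ℤ_[p] W
  have hsum : Module.finrank ℤ_[p] P + Module.finrank ℤ_[p] Q = d := by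
    rw [← hW, ← Module.finrank_prod]
    exact LinearEquiv.finrank_eq (Submodule.prodEquivOfIsCompl P Q hPQ)
  rw [hP] at hsum
  have hQ1 : Module.finrank ℤ_[p] Q = 1 := by omega
  let b := (Module.finBasis ℤ_[p] Q).reindex (finCongr hQ1)
  exact ⟨b.equivFun.trans (LinearEquiv.funUnique (Fin 1) ℤ_[p] ℤ_[p])⟩

theorem aux_functional {W : Type*} [AddCommGroup W] [Module ℤ_[p] W]
    [Module.Free ℤ_[p] W] [Module.Finite ℤ_[p] W] {d : ℕ} (hd : 1 ≤ d)
    (hW : Module.finrank ℤ_[p] W = d)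
    {P Q : Submodule ℤ_[p] W} (hPQ : IsCompl P Q)
    (hP : Module.finrank ℤ_[p] P = d - 1) :
    ∃ f : W →ₗ[ℤ_[p]] ℤ_[p], LinearMap.ker f = P := by
  obtain ⟨e⟩ := aux_compl hd hW hPQ hP
  refine ⟨e.toLinearMap ∘ₗ Q.projectionOnto P hPQ.symm, ?_⟩
  rw [LinearMap.ker_comp, LinearEquiv.ker, Submodule.comap_bot,
    Submodule.ker_projectionOnto]

theorem aux_compl' {W : Type*} [AddCommGroup W] [Module ℤ_[p] W]
    [Module.Free ℤ_[p] W] [Module.Finite ℤ_[p] W] {d : ℕ} (hd : 1 ≤ d)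
    (hW : Module.finrank ℤ_[p] W = d)
    {P Q : Submodule ℤ_[p] W} (hPQ : IsCompl P Q)
    (hP : Module.finrank ℤ_[p] P = d - 1) :
    Nonempty ((W ⧸ P) ≃ₗ[ℤ_[p]] ℤ_[p]) := by
  obtain ⟨e⟩ := aux_compl hd hW hPQ hP
  exact ⟨(Submodule.quotientEquivOfIsCompl P Q hPQ).trans e⟩

theorem aux_eq {W : Type*} [AddCommGroup W] [Module ℤ_[p] W]
    [Module.Free ℤ_[p] W] [Module.Finite ℤ_[p] W] {d : ℕ} (hd : 1 ≤ d)
    (hW : Module.finrank ℤ_[p] W = d)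
    {P Q P' Q' : Submodule ℤ_[p] W} (hPQ : IsCompl P Q) (hPQ' : IsCompl P' Q')
    (hP : Module.finrank ℤ_[p] P = d - 1) (hP' : Module.finrank ℤ_[p] P' = d - 1)
    (hle : P' ≤ P) : P' = P := by
  obtain ⟨E2⟩ := aux_compl' hd hW hPQ hP
  obtain ⟨E1⟩ := aux_compl' hd hW hPQ' hP'
  have hle' : P' ≤ Submodule.comap (LinearMap.id : W →ₗ[ℤ_[p]] W) P := by simpa using hle
  set φ : (W ⧸ P') →ₗ[ℤ_[p]] W ⧸ P := Submodule.mapQ P' P LinearMap.id hle' with hφ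
  have hφ_mk : ∀ x : W, φ (P'.mkQ x) = P.mkQ x := by
    intro x; simp [hφ, Submodule.mapQ_apply]
  have hφsurj : Function.Surjective φ := by
    intro y
    obtain ⟨x, rfl⟩ := P.mkQ_surjective y
    exact ⟨P'.mkQ x, hφ_mk x⟩
  set g : ℤ_[p] →ₗ[ℤ_[p]] ℤ_[p] := E2.toLinearMap ∘ₗ φ ∘ₗ E1.symm.toLinearMap with hg
  have hgsurj : Function.Surjective g := by
    intro y
    obtain ⟨z, hz⟩ := hφsurj (E2.symm y)
    exact ⟨E1 z, by simp [hg, hz]⟩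
  have hgform : ∀ x : ℤ_[p], g x = x * g 1 := by
    intro x
    have : g x = g (x • (1 : ℤ_[p])) := by simp
    rw [this, map_smul, smul_eq_mul]
  have hg1 : g 1 ≠ 0 := by
    obtain ⟨c, hc⟩ := hgsurj 1
    intro h0
    rw [hgform c, h0, mul_zero] at hc
    exact one_ne_zero hc.symm
  have hginj : Function.Injective g := by
    intro a b hab
    rw [hgform a, hgform b] at hab
    exact mul_right_cancel₀ hg1 hab
  have hφinj : Function.Injective φ := by
    intro a b hab
    have h1 : g (E1 a) = g (E1 b) := by simp [hg, hab]
    exact E1.injective (hginj h1)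
  refine le_antisymm hle fun x hx => ?_
  have h1 : φ (P'.mkQ x) = 0 := by
    rw [hφ_mk x]
    simpa [Submodule.Quotient.mk_eq_zero] using hx
  have h2 : P'.mkQ x = 0 := hφinj (by simpa using h1)
  simpa [Submodule.Quotient.mk_eq_zero] using h2

end Aux

/-- Claim (eqn. vS) in the proof of Lemma B.5: for any member `W'` of a finite collection `D`
of free rank-`(d-1)` direct summands of the free rank-`d` module `W`, there exists
`v ∈ W ∖ ⋃ D` with `W' + ℤ_p·v = W`. -/
theorem stmt_4 (p : ℕ) [Fact p.Prime] (d : ℕ) (hd : 1 ≤ d)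
    (W : Type*) [AddCommGroup W] [Module ℤ_[p] W]
    [Module.Free ℤ_[p] W] [Module.Finite ℤ_[p] W]
    (hW : Module.finrank ℤ_[p] W = d)
    (D : Finset (Submodule ℤ_[p] W))
    (hD : ∀ P ∈ D, (∃ Q : Submodule ℤ_[p] W, IsCompl P Q) ∧
      Module.Free ℤ_[p] P ∧ Module.finrank ℤ_[p] P = d - 1)
    (W' : Submodule ℤ_[p] W) (hW' : W' ∈ D) :
    ∃ v : W, (∀ P ∈ D, v ∉ P) ∧ W' ⊔ Submodule.span ℤ_[p] {v} = ⊤ := by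
  classical
  obtain ⟨⟨Q', hQ'⟩, _, hW'rank⟩ := hD W' hW'
  obtain ⟨e⟩ := aux_compl hd hW hQ' hW'rank
  -- generator of Q'
  set w₀ : Q' := e.symm 1 with hw₀
  have hw₀ne : (w₀ : W) ≠ 0 := by
    intro h0
    have : w₀ = 0 := Subtype.ext h0
    rw [hw₀] at this
    have := e.symm.injective (this.trans (by simp : (0 : Q') = e.symm 0))
    exact one_ne_zero this
  have hspan : Submodule.span ℤ_[p] {(w₀ : W)} = Q' := by
    refine le_antisymm (Submodule.span_le.mpr ?_) fun x hx => ?_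
    · intro y hy; rcases hy with rfl; exact w₀.2
    · have hx' : (⟨x, hx⟩ : Q') = e ⟨x, hx⟩ • w₀ := by
        rw [hw₀]
        have : e ((e ⟨x, hx⟩) • e.symm 1) = e ⟨x, hx⟩ := by
          rw [map_smul]; simp [smul_eq_mul]
        exact e.injective (by simpa using this.symm)
      have : x = e ⟨x, hx⟩ • (w₀ : W) := by
        have := congrArg (Subtype.val) hx'
        simpa using this
      rw [this]
      exact Submodule.smul_mem _ _ (Submodule.mem_span_singleton_self _)
  -- functionals for the other members of D
  have hfun : ∀ P : {x // x ∈ D.erase W'}, ∃ f : W →ₗ[ℤ_[p]] ℤ_[p],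
      LinearMap.ker f = P.1 := by
    rintro ⟨P, hP⟩
    obtain ⟨⟨Q, hQ⟩, _, hPrank⟩ := hD P (Finset.mem_of_mem_erase hP)
    exact aux_functional hd hW hQ hPrank
  choose f hf using hfun
  set S : Finset ((W' →ₗ[ℤ_[p]] ℤ_[p]) × ℤ_[p]) :=
    (D.erase W').attach.image
      (fun P => ((f P).comp W'.subtype, -(f P (w₀ : W)))) with hSdef
  have hSne : ∀ q ∈ S, q.1 ≠ 0 := by
    intro q hq
    rw [hSdef, Finset.mem_image] at hq
    obtain ⟨⟨P, hP⟩, _, rfl⟩ := hq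
    intro h0
    have hle : W' ≤ P := by
      intro x hx
      have : (f ⟨P, hP⟩) x = 0 := by
        have := congrArg (fun g => g ⟨x, hx⟩) h0
        simpa using this
      have hk : x ∈ LinearMap.ker (f ⟨P, hP⟩) := LinearMap.mem_ker.mpr this
      rw [hf ⟨P, hP⟩] at hk
      exact hk
    obtain ⟨⟨QP, hQP⟩, _, hPrank⟩ := hD P (Finset.mem_of_mem_erase hP)
    have : W' = P := aux_eq hd hW hQP hQ' hPrank hW'rank hle
    exact (Finset.ne_of_mem_erase hP) this.symm
  obtain ⟨u, hu⟩ := aux_avoid S hSne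
  refine ⟨(w₀ : W) + (u : W), ?_, ?_⟩
  · intro P hP hmem
    rcases eq_or_ne P W' with heq | hne
    · rw [heq] at hmem
      have : (w₀ : W) ∈ W' := by
        have := W'.sub_mem hmem u.2
        simpa using this
      have : (w₀ : W) ∈ W' ⊓ Q' := ⟨this, w₀.2⟩
      rw [hQ'.inf_eq_bot] at this
      exact hw₀ne this
    · have hP' : P ∈ D.erase W' := Finset.mem_erase.mpr ⟨hne, hP⟩
      have hSmem : ((f ⟨P, hP'⟩).comp W'.subtype, -(f ⟨P, hP'⟩ (w₀ : W))) ∈ S := by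
        rw [hSdef]
        exact Finset.mem_image_of_mem _ (Finset.mem_attach _ ⟨P, hP'⟩)
      have hker : (f ⟨P, hP'⟩) ((w₀ : W) + (u : W)) = 0 := by
        rw [← LinearMap.mem_ker, hf ⟨P, hP'⟩]; exact hmem
      have : (f ⟨P, hP'⟩) (u : W) = -(f ⟨P, hP'⟩ (w₀ : W)) := by
        rw [map_add] at hker
        rw [eq_neg_iff_add_eq_zero, add_comm]
        exact hker
      exact hu _ hSmem (by simpa using this)
  · have htop : W' ⊔ Q' = ⊤ := codisjoint_iff.mp hQ'.codisjoint
    rw [← hspan] at htop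
    refine le_antisymm le_top ?_
    rw [← htop]
    refine sup_le le_sup_left ?_
    rw [Submodule.span_le]
    intro y hy; rcases hy with rfl
    have h1 : ((w₀ : W) + (u : W)) ∈ W' ⊔ Submodule.span ℤ_[p] {((w₀ : W) + (u : W))} :=
      Submodule.mem_sup_right (Submodule.mem_span_singleton_self _)
    have h2 : (u : W) ∈ W' ⊔ Submodule.span ℤ_[p] {((w₀ : W) + (u : W))} :=
      Submodule.mem_sup_left u.2
    have := Submodule.sub_mem _ h1 h2
    simpa using this
end

section
/- Let p be a prime, V a free ℤ_p-module of finite rank g, and U ⊆ V a direct summand which is free of rank g − s, where 0 ≤ s ≤ g. Then there exists a ℤ_p-basis v₁,…,v_g of V such that for every subset I ⊆ {1,…,g} with |I| = s, the ℤ_p-span of {v_i : i ∈ I} intersects U trivially: span_{ℤ_p}(v_i : i ∈ I) ∩ U = 0. -/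
open Matrix MvPolynomial

/-- Genericity lemma: over an infinite domain there is an `s × r` matrix `A` such that,
augmenting its columns with the standard basis columns (indexed by `Fin s`), every choice
of `s` distinct columns has nonzero determinant. -/
private lemma gen_matrix (R : Type*) [CommRing R] [IsDomain R] [Infinite R] (s r : ℕ) :
    ∃ A : Matrix (Fin s) (Fin r) R, ∀ c : Fin s → (Fin r ⊕ Fin s), Function.Injective c →
      (Matrix.of fun l κ =>
        Sum.elim (A l) (fun k => if k = l then (1 : R) else 0) (c κ)).det ≠ 0 := by
  classical
  set ι := (Fin s × Fin r)
  let Mc : (Fin s → Fin r ⊕ Fin s) → Matrix (Fin s) (Fin s) (MvPolynomial ι R) :=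
    fun c => Matrix.of fun l κ =>
      Sum.elim (fun j => (X (l, j) : MvPolynomial ι R))
        (fun k => if k = l then 1 else 0) (c κ)
  have hdet : ∀ c : Fin s → Fin r ⊕ Fin s, Function.Injective c → (Mc c).det ≠ 0 := by
    intro c hc
    -- build a permutation τ extending κ ↦ k whenever c κ = inr k
    let F : {κ : Fin s // (c κ).isRight} → {k : Fin s // ∃ κ, c κ = Sum.inr k} :=
      fun κ => ⟨(c κ.1).getRight κ.2, κ.1, (Sum.inr_getRight _ κ.2).symm⟩
    have hFb : Function.Bijective F := by
      constructor
      · rintro ⟨κ1, h1⟩ ⟨κ2, h2⟩ h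
        have : c κ1 = c κ2 := by
          rw [← Sum.inr_getRight (c κ1) h1, ← Sum.inr_getRight (c κ2) h2]
          exact congrArg Sum.inr (Subtype.ext_iff.mp h)
        exact Subtype.ext (hc this)
      · rintro ⟨k, κ, hκ⟩
        have hrr : (c κ).isRight := by rw [hκ]; rfl
        refine ⟨⟨κ, hrr⟩, Subtype.ext ?_⟩
        exact Sum.inr_injective ((Sum.inr_getRight (c κ) hrr).trans hκ)
    let e := Equiv.ofBijective F hFb
    let τ : Equiv.Perm (Fin s) := e.extendSubtype
    have hτ : ∀ κ k, c κ = Sum.inr k → τ κ = k := by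
      intro κ k hκ
      have hrr : (c κ).isRight := by rw [hκ]; rfl
      have : τ κ = (e ⟨κ, hrr⟩ : Fin s) := e.extendSubtype_apply_of_mem κ hrr
      rw [this]
      show ((c κ).getRight hrr) = k
      exact Sum.inr_injective ((Sum.inr_getRight (c κ) hrr).trans hκ)
    -- evaluation point
    let x₀ : ι → R := fun q => if ∃ κ, c κ = Sum.inl q.2 ∧ τ κ = q.1 then 1 else 0
    have hmap : (Mc c).map (eval x₀) =
        Matrix.of (fun l κ => if τ κ = l then (1 : R) else 0) := by
      ext l κ
      rcases hcκ : c κ with j | k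
      · have : eval x₀ ((Mc c) l κ) = x₀ (l, j) := by
          simp [Mc, hcκ]
        rw [Matrix.map_apply, this]
        show (if ∃ κ', c κ' = Sum.inl j ∧ τ κ' = l then (1:R) else 0) = _
        congr 1
        simp only [eq_iff_iff]
        constructor
        · rintro ⟨κ', h1, h2⟩
          rwa [hc (h1.trans hcκ.symm)] at h2
        · intro h; exact ⟨κ, hcκ, h⟩
      · have hk := hτ κ k hcκ
        simp [Mc, hcκ, Matrix.map_apply, apply_ite (eval x₀), hk]
    have hperm : Matrix.of (fun l κ => if τ κ = l then (1 : R) else 0) =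
        (Equiv.Perm.permMatrix R τ)ᵀ := by
      ext l κ
      simp [Equiv.Perm.permMatrix, PEquiv.toMatrix, Equiv.toPEquiv, Matrix.transpose_apply,
        Option.mem_def, eq_comm]
    intro h0
    have : eval x₀ (Mc c).det = 0 := by rw [h0, map_zero]
    rw [RingHom.map_det, RingHom.mapMatrix_apply, hmap, hperm, Matrix.det_transpose, Matrix.det_permutation] at this
    rcases Int.units_eq_one_or (Equiv.Perm.sign τ) with hs | hs <;>
      simp [hs] at this
  -- product of all determinants
  let P : MvPolynomial ι R :=
    ∏ c ∈ Finset.univ.filter (fun c : Fin s → Fin r ⊕ Fin s => Function.Injective c), (Mc c).det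
  have hP : P ≠ 0 := by
    rw [Finset.prod_ne_zero_iff]
    intro c hcmem
    exact hdet c (Finset.mem_filter.mp hcmem).2
  have hex : ∃ x : ι → R, eval x P ≠ 0 := by
    by_contra h
    push_neg at h
    exact hP (MvPolynomial.funext fun x => by rw [h x, map_zero])
  obtain ⟨x, hx⟩ := hex
  refine ⟨Matrix.of fun l j => x (l, j), ?_⟩
  intro c hc
  have hfac : eval x (Mc c).det ≠ 0 := by
    intro h0
    apply hx
    have hcmem : c ∈ Finset.univ.filter
        (fun c : Fin s → Fin r ⊕ Fin s => Function.Injective c) := by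
      simp [hc]
    rw [map_prod]
    exact Finset.prod_eq_zero hcmem h0
  have : eval x (Mc c).det =
      (Matrix.of fun l κ =>
        Sum.elim ((Matrix.of fun l j => x (l, j)) l)
          (fun k => if k = l then (1 : R) else 0) (c κ)).det := by
    rw [RingHom.map_det]
    congr 1
    ext l κ
    rcases hcκ : c κ with j | k <;> simp [Mc, hcκ, apply_ite (eval x)]
  rwa [this] at hfac

/-- Proposition B.1 (admissible basis, module-theoretic content): if `U` is a free rank-`(g-s)`
direct summand of a free rank-`g` ℤ_p-module `V`, there is a basis `v₁, …, v_g` of `V`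
such that the span of any `s` of the `v_i` meets `U` trivially. -/
theorem stmt_6 (p : ℕ) [Fact p.Prime] (g s : ℕ) (hs : s ≤ g)
    (V : Type*) [AddCommGroup V] [Module ℤ_[p] V]
    [Module.Free ℤ_[p] V] [Module.Finite ℤ_[p] V]
    (hV : Module.finrank ℤ_[p] V = g)
    (U : Submodule ℤ_[p] V) (hUc : ∃ U' : Submodule ℤ_[p] V, IsCompl U U')
    (hUfree : Module.Free ℤ_[p] U) (hU : Module.finrank ℤ_[p] U = g - s) :
    ∃ v : Module.Basis (Fin g) ℤ_[p] V,
      ∀ I : Finset (Fin g), I.card = s →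
        Submodule.span ℤ_[p] (⇑v '' (I : Set (Fin g))) ⊓ U = ⊥ := by
  classical
  obtain ⟨U', hc⟩ := hUc
  set R := ℤ_[p]
  have hr : (g - s) + s = g := Nat.sub_add_cancel hs
  haveI : IsNoetherian R V := isNoetherian_of_isNoetherianRing_of_finite R V
  haveI : Module.Finite R U := inferInstance
  haveI : Module.Finite R U' := inferInstance
  haveI : Module.Free R U' := inferInstance
  have hU' : Module.finrank R U' = s := by
    have h1 : Module.finrank R (U × U') = Module.finrank R U + Module.finrank R U' :=
      Module.finrank_prod
    have h2 : Module.finrank R (U × U') = Module.finrank R V :=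
      (Submodule.prodEquivOfIsCompl U U' hc).finrank_eq
    have h3 : Module.finrank R V = g := hV
    have h4 : Module.finrank R U = g - s := hU
    omega
  let b : Module.Basis (Fin (g - s)) R U := Module.finBasisOfFinrankEq R U hU
  let b' : Module.Basis (Fin s) R U' := Module.finBasisOfFinrankEq R U' hU'
  obtain ⟨A, hA⟩ := gen_matrix R s (g - s)
  let L : U →ₗ[R] U' := b.constr R fun j => ∑ k, A k j • b' k
  let πU : V →ₗ[R] U := Submodule.linearProjOfIsCompl U U' hc
  let πU' : V →ₗ[R] U' := Submodule.linearProjOfIsCompl U' U hc.symm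
  let n : V →ₗ[R] V := U'.subtype ∘ₗ L ∘ₗ πU
  have hnval : ∀ x : V, n x = ↑(L (πU x)) := fun x => rfl
  have hn2 : ∀ x, n (n x) = 0 := by
    intro x
    have h1 : πU (n x) = 0 :=
      Submodule.projectionOnto_apply_of_mem_right hc (L (πU x)).2
    rw [hnval, h1, map_zero, Submodule.coe_zero]
  let f : V ≃ₗ[R] V := LinearEquiv.ofLinear (LinearMap.id + n) (LinearMap.id - n)
    (by
      ext x
      simp only [LinearMap.coe_comp, Function.comp_apply, LinearMap.add_apply,
        LinearMap.sub_apply, LinearMap.id_apply, map_sub, hn2]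
      abel)
    (by
      ext x
      simp only [LinearMap.coe_comp, Function.comp_apply, LinearMap.add_apply,
        LinearMap.sub_apply, LinearMap.id_apply, map_add, hn2]
      abel)
  have hfval : ∀ x : V, f x = x + n x := fun x => rfl
  let e : Module.Basis ((Fin (g - s)) ⊕ (Fin s)) R V :=
    (b.prod b').map (Submodule.prodEquivOfIsCompl U U' hc)
  have he_inl : ∀ j, e (Sum.inl j) = (b j : V) := by
    intro j
    simp [e, Module.Basis.prod_apply, Submodule.coe_prodEquivOfIsCompl']
  have he_inr : ∀ k, e (Sum.inr k) = (b' k : V) := by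
    intro k
    simp [e, Module.Basis.prod_apply, Submodule.coe_prodEquivOfIsCompl']
  let v0 : Module.Basis ((Fin (g - s)) ⊕ (Fin s)) R V := e.map f
  have hπ : ∀ z, πU' (v0 z) = Sum.elim (fun j => L (b j)) b' z := by
    rintro (j | k)
    · have : v0 (Sum.inl j) = (b j : V) + ↑(L (πU (b j : V))) := by
        rw [Module.Basis.map_apply, he_inl, hfval, hnval]
      rw [this, map_add]
      have h1 : πU' ((b j : V)) = 0 :=
        Submodule.projectionOnto_apply_of_mem_right hc.symm (b j).2
      have h2 : πU (b j : V) = b j :=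
        Submodule.linearProjOfIsCompl_apply_left hc (b j)
      have h3 : πU' ((L (b j) : U') : V) = L (b j) :=
        Submodule.linearProjOfIsCompl_apply_left hc.symm (L (b j))
      rw [h1, h2, h3, zero_add]
      rfl
    · have h0 : πU (b' k : V) = 0 :=
        Submodule.projectionOnto_apply_of_mem_right hc (b' k).2
      have : v0 (Sum.inr k) = (b' k : V) + ↑(L (πU (b' k : V))) := by
        rw [Module.Basis.map_apply, he_inr, hfval, hnval]
      rw [this, h0, map_zero, Submodule.coe_zero, add_zero]
      exact Submodule.linearProjOfIsCompl_apply_left hc.symm (b' k)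
  have hL : ∀ j, L (b j) = ∑ k, A k j • b' k := fun j => b.constr_basis R _ j
  have hrepr : ∀ z l, b'.repr (Sum.elim (fun j => L (b j)) b' z) l
      = Sum.elim (A l) (fun k => if k = l then (1 : R) else 0) z := by
    rintro (j | k) l
    · simp only [Sum.elim_inl, hL, map_sum, _root_.map_smul]
      rw [Finset.sum_apply']
      simp [Finsupp.single_apply, Finset.sum_ite_eq]
    · simp [Module.Basis.repr_self, Finsupp.single_apply]
  let ι : ((Fin (g - s)) ⊕ (Fin s)) ≃ Fin g := finSumFinEquiv.trans (finCongr hr)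
  let vb : Module.Basis (Fin g) R V := v0.reindex ι
  refine ⟨vb, ?_⟩
  intro I hI
  let σ0 := I.orderIsoOfFin hI
  let c : Fin s → (Fin (g - s)) ⊕ (Fin s) := fun κ => ι.symm (σ0 κ)
  have hcinj : Function.Injective c := by
    intro a b' hab
    apply_fun ι at hab
    rw [Equiv.apply_symm_apply, Equiv.apply_symm_apply] at hab
    exact σ0.injective (Subtype.ext hab)
  have hdet := hA c hcinj
  set M : Matrix (Fin s) (Fin s) R :=
    Matrix.of (fun l κ =>
      Sum.elim (A l) (fun k => if k = l then (1 : R) else 0) (c κ)) with hM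
  have hMentry : ∀ l κ, M l κ = b'.repr (πU' (vb (σ0 κ))) l := by
    intro l κ
    have : vb (σ0 κ) = v0 (c κ) := Module.Basis.reindex_apply v0 ι (σ0 κ)
    rw [this, hπ, hrepr]
    rfl
  rw [eq_bot_iff]
  intro x hx
  rw [Submodule.mem_inf] at hx
  obtain ⟨hxs, hxU⟩ := hx
  have hx0 : πU' x = 0 := Submodule.projectionOnto_apply_of_mem_right hc.symm hxU
  have hxs' : x ∈ Submodule.span R ↑(I.image vb) := by
    rwa [Finset.coe_image]
  obtain ⟨fc, -, hf⟩ := Submodule.mem_span_finset.mp hxs'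
  let a : Fin s → R := fun κ => fc (vb (σ0 κ))
  have hsum : ∑ κ : Fin s, a κ • vb (σ0 κ) = x := by
    rw [← hf, Finset.sum_image (fun i _ j _ h => vb.injective h)]
    rw [← Finset.sum_coe_sort I (fun i => fc (vb i) • vb i)]
    exact Equiv.sum_comp σ0.toEquiv (fun i : I => fc (vb i) • vb (i : Fin g))
  have hMa : M.mulVec a = 0 := by
    funext l
    have : M.mulVec a l = ∑ κ, a κ * b'.repr (πU' (vb (σ0 κ))) l := by
      simp only [Matrix.mulVec, dotProduct]
      exact Finset.sum_congr rfl fun κ _ => by rw [hMentry, mul_comm]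
    rw [this]
    have : ∑ κ, a κ * b'.repr (πU' (vb (σ0 κ))) l
        = b'.repr (πU' (∑ κ : Fin s, a κ • vb (σ0 κ))) l := by
      rw [map_sum, map_sum, Finset.sum_apply']
      refine Finset.sum_congr rfl fun κ _ => ?_
      rw [LinearMap.map_smul, LinearEquiv.map_smul, Finsupp.smul_apply, smul_eq_mul]
    rw [this, hsum, hx0, map_zero]
    rfl
  have ha : ∀ κ, a κ = 0 := by
    have h1 : M.det • a = 0 := by
      have : M.det • a = (M.adjugate * M).mulVec a := by
        rw [Matrix.adjugate_mul, Matrix.smul_mulVec, Matrix.one_mulVec]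
      rw [this, ← Matrix.mulVec_mulVec, hMa, Matrix.mulVec_zero]
    intro κ
    have h2 : M.det * a κ = 0 := by
      have := congrFun h1 κ
      simpa using this
    rcases mul_eq_zero.mp h2 with h | h
    · exact absurd h hdet
    · exact h
  rw [Submodule.mem_bot, ← hsum]
  simp [ha]
end

section
/- Let p be a prime, s ≥ 1 an integer, V a ℚ_p-vector space of dimension 2s, and W, W' ⊆ V subspaces with dim W = dim W' = s. Then there exist vectors v₁,…,v_{2s} ∈ V such that for every subset I ⊆ {1,…,2s} with |I| = s, one has span_{ℚ_p}(v_i : i ∈ I) ∩ W = 0 and span_{ℚ_p}(v_i : i ∈ I) ∩ W' = 0. -/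
open Submodule Module

/-- Over an infinite field, a vector space is not covered by finitely many proper subspaces. -/
lemma avoid_aux {K E : Type*} [Field K] [Infinite K] [AddCommGroup E] [Module K E]
    {ι : Type*} [Finite ι] (f : ι → Submodule K E) (hf : ∀ i, f i ≠ ⊤) :
    ∃ x : E, ∀ i, x ∉ f i := by
  by_contra h
  push_neg at h
  have hcov : ⋃ i, (f i : Set E) = Set.univ := by
    ext x
    simp only [Set.mem_iUnion, Set.mem_univ, iff_true, SetLike.mem_coe]
    exact h x
  obtain ⟨i, hi⟩ := Subspace.exists_eq_top_of_iUnion_eq_univ hcov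
  exact hf i hi

/-- Proposition B.1 (strongly admissible basis, vector-space content): given two `s`-dimensional
subspaces `W, W'` of a `2s`-dimensional ℚ_p-vector space `V`, there are vectors `v₁, …, v_{2s}`
such that the span of any `s` of them meets both `W` and `W'` trivially. -/
theorem stmt_7 (p : ℕ) [Fact p.Prime] (s : ℕ) (hs : 1 ≤ s)
    (V : Type*) [AddCommGroup V] [Module ℚ_[p] V] [FiniteDimensional ℚ_[p] V]
    (hV : Module.finrank ℚ_[p] V = 2 * s)
    (W W' : Submodule ℚ_[p] V)
    (hW : Module.finrank ℚ_[p] W = s) (hW' : Module.finrank ℚ_[p] W' = s) :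
    ∃ v : Fin (2 * s) → V,
      ∀ I : Finset (Fin (2 * s)), I.card = s →
        Submodule.span ℚ_[p] (v '' (I : Set (Fin (2 * s)))) ⊓ W = ⊥ ∧
        Submodule.span ℚ_[p] (v '' (I : Set (Fin (2 * s)))) ⊓ W' = ⊥ := by
  classical
  have hVpos : 0 < Module.finrank ℚ_[p] V := by omega
  have : Nontrivial V := Module.nontrivial_of_finrank_pos hVpos
  -- inductive construction
  have key : ∀ k : ℕ, ∃ v : Fin (2*s) → V, ∀ i : Fin (2*s), (i:ℕ) < k →
      ∀ J : Finset (Fin (2*s)), (∀ j ∈ J, j < i) → J.card < s →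
        v i ∉ (span ℚ_[p] (v '' J) ⊔ W) ∧ v i ∉ (span ℚ_[p] (v '' J) ⊔ W') := by
    intro k
    induction k with
    | zero => exact ⟨0, fun i hi => absurd hi (Nat.not_lt_zero _)⟩
    | succ k ih =>
      obtain ⟨v, hv⟩ := ih
      by_cases hk : k < 2*s
      · set f : Finset (Fin (2*s)) × Bool → Submodule ℚ_[p] V := fun Jb =>
          if Jb.1.card < s ∧ ∀ j ∈ Jb.1, (j:ℕ) < k
          then span ℚ_[p] (v '' Jb.1) ⊔ (cond Jb.2 W W') else ⊥ with hfdef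
        have hf : ∀ Jb, f Jb ≠ ⊤ := by
          rintro ⟨J, b⟩
          simp only [hfdef]
          split_ifs with hcond
          · apply ne_of_lt
            apply Submodule.lt_top_of_finrank_lt_finrank
            rw [hV]
            have h1 : finrank ℚ_[p] (span ℚ_[p] (v '' (J:Set (Fin (2*s))))) ≤ J.card := by
              have : v '' (J : Set (Fin (2*s))) = ((J.image v : Finset V) : Set V) := by
                simp [Finset.coe_image]
              rw [this]
              exact (finrank_span_finset_le_card (J.image v)).trans
                (Finset.card_image_le)
            have h2 : finrank ℚ_[p] (cond b W W' : Submodule ℚ_[p] V) = s := by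
              cases b <;> simpa
            have h3 := Submodule.finrank_sup_add_finrank_inf_eq
              (span ℚ_[p] (v '' (J:Set (Fin (2*s))))) (cond b W W')
            omega
          · exact bot_ne_top
        obtain ⟨w, hw⟩ := avoid_aux f hf
        refine ⟨Function.update v ⟨k, hk⟩ w, ?_⟩
        intro i hi J hJ hJcard
        have himg : Function.update v ⟨k, hk⟩ w '' (J : Set (Fin (2*s))) =
            v '' (J : Set (Fin (2*s))) := by
          apply Set.image_congr
          intro j hj
          apply Function.update_of_ne
          have : (j:ℕ) < (i:ℕ) := hJ j hj
          have : (j:ℕ) < k := by omega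
          intro hji
          rw [hji] at this
          simp at this
        rcases lt_or_eq_of_le (Nat.lt_succ_iff.mp hi) with hik | hik
        · have hine : i ≠ ⟨k, hk⟩ := by
            intro h; rw [h] at hik; simp at hik
          rw [himg, Function.update_of_ne hine]
          exact hv i hik J hJ hJcard
        · have hieq : i = ⟨k, hk⟩ := Fin.ext hik
          rw [himg, hieq, Function.update_self]
          have hcond : J.card < s ∧ ∀ j ∈ J, (j:ℕ) < k := by
            refine ⟨hJcard, fun j hj => ?_⟩
            have := hJ j hj
            rw [hieq] at this
            exact this
          have hft : f (J, true) = span ℚ_[p] (v '' (J : Set (Fin (2*s)))) ⊔ W := by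
            simp only [hfdef]; rw [if_pos hcond]; rfl
          have hff : f (J, false) = span ℚ_[p] (v '' (J : Set (Fin (2*s)))) ⊔ W' := by
            simp only [hfdef]; rw [if_pos hcond]; rfl
          exact ⟨hft ▸ hw (J, true), hff ▸ hw (J, false)⟩
      · exact ⟨v, fun i hi => hv i (lt_of_lt_of_le i.isLt (le_of_not_gt hk))⟩
  obtain ⟨v, hv⟩ := key (2*s)
  have main : ∀ U : Submodule ℚ_[p] V,
      (∀ i : Fin (2*s), ∀ J : Finset (Fin (2*s)), (∀ j ∈ J, j < i) → J.card < s →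
        v i ∉ (span ℚ_[p] (v '' J) ⊔ U)) →
      ∀ I : Finset (Fin (2*s)), I.card = s →
        span ℚ_[p] (v '' (I : Set (Fin (2*s)))) ⊓ U = ⊥ := by
    intro U hU I hI
    rw [eq_bot_iff]
    intro x hx
    rw [Submodule.mem_inf] at hx
    obtain ⟨hx1, hx2⟩ := hx
    rw [Finsupp.mem_span_image_iff_linearCombination] at hx1
    obtain ⟨l, hl, rfl⟩ := hx1
    rcases eq_or_ne l 0 with rfl | hl0
    · simp
    · exfalso
      have hne : l.support.Nonempty := Finsupp.support_nonempty_iff.mpr hl0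
      set i := l.support.max' hne with hidef
      have hisupp : i ∈ l.support := l.support.max'_mem hne
      have hci : l i ≠ 0 := Finsupp.mem_support_iff.mp hisupp
      set J := l.support.erase i with hJdef
      have hJi : ∀ j ∈ J, j < i := fun j hj =>
        lt_of_le_of_ne (l.support.le_max' j (Finset.mem_of_mem_erase hj))
          (Finset.ne_of_mem_erase hj)
      have hJcard : J.card < s := by
        have hsub : l.support ⊆ I := (Finsupp.mem_supported ℚ_[p] l).mp hl
        calc J.card < l.support.card := Finset.card_erase_lt_of_mem hisupp
          _ ≤ I.card := Finset.card_le_card hsub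
          _ = s := hI
      apply hU i J hJi hJcard
      have hx : Finsupp.linearCombination ℚ_[p] v l = l i • v i + ∑ j ∈ J, l j • v j := by
        rw [Finsupp.linearCombination_apply, Finsupp.sum, ← Finset.add_sum_erase _ _ hisupp]
      have hsum : Finsupp.linearCombination ℚ_[p] v l - ∑ j ∈ J, l j • v j = l i • v i := by
        rw [hx, add_sub_cancel_right]
      have hvi : v i = (l i)⁻¹ • (Finsupp.linearCombination ℚ_[p] v l - ∑ j ∈ J, l j • v j) := by
        rw [hsum, smul_smul, inv_mul_cancel₀ hci, one_smul]
      rw [hvi]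
      refine Submodule.smul_mem _ _ (Submodule.sub_mem _ (Submodule.mem_sup_right hx2) ?_)
      refine Submodule.mem_sup_left (Submodule.sum_mem _ fun j hj =>
        Submodule.smul_mem _ _ (Submodule.subset_span ⟨j, hj, rfl⟩))
  refine ⟨v, fun I hI => ⟨?_, ?_⟩⟩
  · exact main W (fun i J h1 h2 => (hv i i.isLt J h1 h2).1) I hI
  · exact main W' (fun i J h1 h2 => (hv i i.isLt J h1 h2).2) I hI
end

section
/- Let p be a prime, let 0 ≤ d₀ ≤ d be integers with d ≥ 1, and let C ∈ GL_d(ℤ_p). Over ℚ_p, set C_φ = C · diag(I_{d₀}, p^{−1}·I_{d−d₀}) ∈ GL_d(ℚ_p). For j ≥ 1 define the matrix C_j = diag(I_{d₀}, Φ_{p^j}(1+X)·I_{d−d₀}) · C^{−1} over the polynomial ring ℚ_p[X], where Φ_{p^j}(1+X) = Σ_{i=0}^{p−1} (1+X)^{i·p^{j−1}}, and for n ≥ 1 set M_n = C_φ^{n+1} · C_n · C_{n−1} ⋯ C_1 ∈ M_{d×d}(ℚ_p[X]). Then for all integers m > n ≥ 1, every entry of M_m − M_n is divisible by ω_n(X)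 := (1+X)^{p^n} − 1 in ℚ_p[X]. -/
noncomputable section

/-- `Φ_{p^j}(1+X) = Σ_{i=0}^{p-1} (1+X)^{i·p^{j-1}}` as a polynomial over `ℚ_p`. -/
def Phi (p : ℕ) [Fact p.Prime] (j : ℕ) : Polynomial ℚ_[p] :=
  ∑ i ∈ Finset.range p, (1 + Polynomial.X) ^ (i * p ^ (j - 1))

/-- The block-diagonal matrix `diag(I_{d₀}, α·I_{d-d₀})`. -/
def blockDiag (p : ℕ) [Fact p.Prime] (d d₀ : ℕ) (α : Polynomial ℚ_[p]) :
    Matrix (Fin d) (Fin d) (Polynomial ℚ_[p]) :=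
  Matrix.diagonal fun i => if (i : ℕ) < d₀ then 1 else α

/-- A matrix over `ℤ_p` regarded as a matrix of constant polynomials over `ℚ_p`. -/
def mapC (p : ℕ) [Fact p.Prime] (d : ℕ) (C : Matrix (Fin d) (Fin d) ℤ_[p]) :
    Matrix (Fin d) (Fin d) (Polynomial ℚ_[p]) :=
  C.map fun a => Polynomial.C (a : ℚ_[p])

/-- `C_φ = C · diag(I_{d₀}, p⁻¹·I_{d-d₀})`. -/
def Cphi (p : ℕ) [Fact p.Prime] (d d₀ : ℕ) (C : Matrix (Fin d) (Fin d) ℤ_[p]) :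
    Matrix (Fin d) (Fin d) (Polynomial ℚ_[p]) :=
  mapC p d C * blockDiag p d d₀ (Polynomial.C ((p : ℚ_[p])⁻¹))

/-- `C_j = diag(I_{d₀}, Φ_{p^j}(1+X)·I_{d-d₀}) · C⁻¹`. -/
def Cmat (p : ℕ) [Fact p.Prime] (d d₀ : ℕ) (C : Matrix (Fin d) (Fin d) ℤ_[p]) (j : ℕ) :
    Matrix (Fin d) (Fin d) (Polynomial ℚ_[p]) :=
  blockDiag p d d₀ (Phi p j) * mapC p d C⁻¹

/-- `M_n = C_φ^{n+1} · C_n · C_{n-1} ⋯ C_1`. -/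
def Mmat (p : ℕ) [Fact p.Prime] (d d₀ : ℕ) (C : Matrix (Fin d) (Fin d) ℤ_[p]) (n : ℕ) :
    Matrix (Fin d) (Fin d) (Polynomial ℚ_[p]) :=
  Cphi p d d₀ C ^ (n + 1) * ((List.range n).map fun j => Cmat p d d₀ C (n - j)).prod

/-- mapC is multiplicative. -/
lemma mapC_mul (p : ℕ) [Fact p.Prime] (d : ℕ) (A B : Matrix (Fin d) (Fin d) ℤ_[p]) :
    mapC p d (A * B) = mapC p d A * mapC p d B := by
  have h : (fun a : ℤ_[p] => Polynomial.C (a : ℚ_[p]))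
      = ⇑(Polynomial.C.comp (PadicInt.Coe.ringHom (p := p))) := rfl
  unfold mapC
  rw [h, Matrix.map_mul]

lemma mapC_one (p : ℕ) [Fact p.Prime] (d : ℕ) :
    mapC p d (1 : Matrix (Fin d) (Fin d) ℤ_[p]) = 1 := by
  have h : (fun a : ℤ_[p] => Polynomial.C (a : ℚ_[p]))
      = ⇑(Polynomial.C.comp (PadicInt.Coe.ringHom (p := p))) := rfl
  unfold mapC
  rw [h, Matrix.map_one _ (map_zero _) (map_one _)]

set_option maxHeartbeats 1000000 in
/-- Proof of Proposition 2.2 (finite-level congruence): for `m > n ≥ 1`, every entry of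
`M_m - M_n` is divisible by `ω_n(X) = (1+X)^{p^n} - 1` in `ℚ_p[X]`. -/
theorem stmt_12 (p : ℕ) [Fact p.Prime] (d d₀ : ℕ) (hd : 1 ≤ d) (hd₀ : d₀ ≤ d)
    (C : Matrix (Fin d) (Fin d) ℤ_[p]) (hC : IsUnit C.det)
    (m n : ℕ) (hn : 1 ≤ n) (hmn : n < m) (i j : Fin d) :
    ((1 + Polynomial.X : Polynomial ℚ_[p]) ^ (p ^ n) - 1) ∣
      (Mmat p d d₀ C m - Mmat p d d₀ C n) i j := by
  set ω : Polynomial ℚ_[p] := (1 + Polynomial.X) ^ (p ^ n) - 1 with hω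
  set I : Ideal (Polynomial ℚ_[p]) := Ideal.span {ω} with hI
  set f : Polynomial ℚ_[p] →+* Polynomial ℚ_[p] ⧸ I := Ideal.Quotient.mk I with hf
  -- basic congruences
  have hone : f ((1 + Polynomial.X) ^ (p ^ n)) = 1 := by
    have h0 : f ω = 0 := Ideal.Quotient.eq_zero_iff_mem.mpr
      (Ideal.subset_span (by simp))
    have := map_sub f ((1 + Polynomial.X) ^ (p ^ n)) 1
    rw [← hω] at this
    rw [h0, map_one] at this
    linear_combination (norm := ring_nf) -this
  have hpow : ∀ k : ℕ, f ((1 + Polynomial.X) ^ (p ^ n * k)) = 1 := by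
    intro k
    rw [pow_mul, map_pow, hone, one_pow]
  have hPhi : ∀ j : ℕ, n < j → f (Phi p j) = f (Polynomial.C ((p : ℚ_[p]))) := by
    intro j hj
    unfold Phi
    rw [map_sum]
    have hterm : ∀ i ∈ Finset.range p, f ((1 + Polynomial.X) ^ (i * p ^ (j - 1))) = 1 := by
      intro i _
      obtain ⟨t, ht⟩ : p ^ n ∣ i * p ^ (j - 1) :=
        dvd_mul_of_dvd_right (pow_dvd_pow p (by omega)) i
      rw [ht]; exact hpow t
    rw [Finset.sum_congr rfl hterm, Finset.sum_const, Finset.card_range,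
      Polynomial.C_eq_natCast, map_natCast]
    simp
  -- key lemma: Cphi * Cmat j ≡ 1 for j > n
  have hkey : ∀ j : ℕ, n < j →
      f.mapMatrix (Cphi p d d₀ C * Cmat p d d₀ C j) = 1 := by
    intro j hj
    have hbd : ∀ α : Polynomial ℚ_[p],
        f.mapMatrix (blockDiag p d d₀ α)
          = Matrix.diagonal (fun i : Fin d => if (i : ℕ) < d₀ then 1 else f α) := by
      intro α
      rw [RingHom.mapMatrix_apply]
      unfold blockDiag
      rw [Matrix.diagonal_map (map_zero f)]
      simp [apply_ite f]
    have hmid : f.mapMatrix (blockDiag p d d₀ (Polynomial.C ((p : ℚ_[p])⁻¹)))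
        * f.mapMatrix (blockDiag p d d₀ (Phi p j)) = 1 := by
      rw [hbd, hbd, Matrix.diagonal_mul_diagonal]
      have : (fun i : Fin d => (if (i : ℕ) < d₀ then 1 else f (Polynomial.C ((p : ℚ_[p])⁻¹)))
          * (if (i : ℕ) < d₀ then 1 else f (Phi p j))) = fun _ => 1 := by
        funext i
        split
        · rw [one_mul]
        · rw [hPhi j hj, ← map_mul, ← map_mul,
            inv_mul_cancel₀ (by exact_mod_cast (Fact.out : p.Prime).ne_zero : (p : ℚ_[p]) ≠ 0),
            map_one, map_one]
      rw [← Matrix.diagonal_one]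
      exact congrArg Matrix.diagonal this
    unfold Cphi Cmat
    rw [map_mul, map_mul, map_mul, mul_assoc,
      ← mul_assoc (f.mapMatrix (blockDiag p d d₀ (Polynomial.C ((p : ℚ_[p])⁻¹)))),
      hmid, one_mul, ← map_mul, ← mapC_mul, Matrix.mul_nonsing_inv C hC, mapC_one, map_one]
  -- induction: f(M_k) = f(M_n) for k ≥ n
  have hM : ∀ k : ℕ, n ≤ k →
      f.mapMatrix (Mmat p d d₀ C k) = f.mapMatrix (Mmat p d d₀ C n) := by
    intro k hk
    induction k with
    | zero => omega
    | succ k ih =>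
      rcases Nat.lt_or_ge n (k + 1) with h | h
      · have hnk : n ≤ k := by omega
        have expand : Mmat p d d₀ C (k + 1)
            = Cphi p d d₀ C ^ (k + 1) * (Cphi p d d₀ C * Cmat p d d₀ C (k + 1))
              * ((List.range k).map fun j => Cmat p d d₀ C (k - j)).prod := by
          unfold Mmat
          rw [List.range_succ_eq_map, List.map_cons, List.prod_cons, List.map_map]
          have heq : ((fun j => Cmat p d d₀ C (k + 1 - j)) ∘ Nat.succ)
              = fun j => Cmat p d d₀ C (k - j) := by
            funext j; simp [Nat.succ_sub_succ]
          rw [heq, Nat.sub_zero, pow_succ]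
          simp [mul_assoc]
        rw [expand, map_mul, map_mul, hkey (k + 1) h, mul_one, ← map_mul]
        have : Cphi p d d₀ C ^ (k + 1)
            * ((List.range k).map fun j => Cmat p d d₀ C (k - j)).prod
            = Mmat p d d₀ C k := rfl
        rw [this]
        exact ih hnk
      · have : n = k + 1 := by omega
        rw [this]
  -- conclude
  have hfin := hM m (le_of_lt hmn)
  rw [← Ideal.mem_span_singleton, ← hI, ← Ideal.Quotient.eq_zero_iff_mem]
  have : f ((Mmat p d d₀ C m - Mmat p d d₀ C n) i j)
      = f.mapMatrix (Mmat p d d₀ C m) i j - f.mapMatrix (Mmat p d d₀ C n) i j := by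
    simp [Matrix.sub_apply, RingHom.mapMatrix_apply, Matrix.map_apply]
  rw [show (Ideal.Quotient.mk I) ((Mmat p d d₀ C m - Mmat p d d₀ C n) i j)
      = f ((Mmat p d d₀ C m - Mmat p d d₀ C n) i j) from rfl, this, hfin, sub_self]

end
end

section
/- Let Λ be an integral domain, H a Λ-module, and K₁,…,K_g submodules of H (g ≥ 1) with ⋂_{i=1}^g K_i = 0. Let W ⊆ H be a torsion-free Λ-submodule generated by at most s elements, where 1 ≤ s ≤ g. Then there exists a subset I ⊆ {1,…,g} with |I| = s such that W ∩ ⋂_{i∈I} K_i = 0. -/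
/-- The saturation of a submodule over a commutative domain. -/
def satSub (Λ : Type*) [CommRing Λ] [IsDomain Λ] {H : Type*} [AddCommGroup H] [Module Λ H]
    (K : Submodule Λ H) : Submodule Λ H where
  carrier := {h | ∃ a : Λ, a ≠ 0 ∧ a • h ∈ K}
  zero_mem' := ⟨1, one_ne_zero, by simp⟩
  add_mem' := by
    rintro x y ⟨a, ha, hax⟩ ⟨b, hb, hby⟩
    refine ⟨a * b, mul_ne_zero ha hb, ?_⟩
    have : (a * b) • (x + y) = b • (a • x) + a • (b • y) := by
      rw [smul_add]; rw [smul_smul, smul_smul, mul_comm b a]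
    rw [this]
    exact K.add_mem (K.smul_mem _ hax) (K.smul_mem _ hby)
  smul_mem' := by
    rintro c x ⟨a, ha, hax⟩
    exact ⟨a, ha, by rw [smul_comm]; exact K.smul_mem _ hax⟩

theorem key_induction (Λ : Type*) [CommRing Λ] [IsDomain Λ]
    (H : Type*) [AddCommGroup H] [Module Λ H]
    (g : ℕ) (L : Fin g → Submodule Λ H)
    (W : Submodule Λ H)
    (hWtf : ∀ r : Λ, r ≠ 0 → ∀ w ∈ W, r • w = 0 → w = 0)
    (hsat : ∀ i, ∀ a : Λ, a ≠ 0 → ∀ h : H, a • h ∈ L i → h ∈ L i) :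
    ∀ s : ℕ, ∀ A : Finset (Fin g), s ≤ A.card → ∀ V : Submodule Λ H, V ≤ W →
      (∀ w : Fin (s + 1) → H, (∀ i, w i ∈ V) → ¬ LinearIndependent Λ w) →
      V ⊓ A.inf L = ⊥ →
      ∃ I : Finset (Fin g), I ⊆ A ∧ I.card = s ∧ V ⊓ I.inf L = ⊥ := by
  intro s
  induction s with
  | zero =>
    intro A _ V hVW hdep _
    refine ⟨∅, Finset.empty_subset _, rfl, ?_⟩
    rw [Finset.inf_empty, inf_top_eq, eq_bot_iff]
    intro v hv
    have := hdep (fun _ => v) (fun _ => hv)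
    rw [Fintype.not_linearIndependent_iff] at this
    obtain ⟨c, hsum, i, hi⟩ := this
    rw [Fin.sum_univ_one] at hsum
    have hi0 : i = 0 := by
      have := i.isLt; rw [Fin.ext_iff]; omega
    have : v = 0 := hWtf (c 0) (hi0 ▸ hi) v (hVW hv) hsum
    simpa using this
  | succ s ih =>
    intro A hA V hVW hdep hbot
    by_cases hV : V = ⊥
    · obtain ⟨I, hIA, hIcard⟩ := Finset.exists_subset_card_eq (s := A) (n := s + 1) hA
      exact ⟨I, hIA, hIcard, by rw [hV, bot_inf_eq]⟩
    · obtain ⟨v, hvV, hv0⟩ := Submodule.exists_mem_ne_zero_of_ne_bot hV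
      -- find j ∈ A with v ∉ L j
      have hj : ∃ j ∈ A, v ∉ L j := by
        by_contra hc
        push_neg at hc
        have : v ∈ V ⊓ A.inf L :=
          ⟨hvV, (Submodule.mem_finsetInf).mpr (fun i hiA => hc i hiA)⟩
        rw [hbot] at this; exact hv0 this
      obtain ⟨j, hjA, hjv⟩ := hj
      set A' := A.erase j with hA'
      have hcardA' : s ≤ A'.card := by
        have h1 : A'.card = A.card - 1 := by rw [hA']; exact Finset.card_erase_of_mem hjA
        omega
      set V' := V ⊓ L j with hV'
      have hinfA : A.inf L = L j ⊓ A'.inf L := by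
        rw [hA', ← Finset.inf_insert, Finset.insert_erase hjA]
      have hbot' : V' ⊓ A'.inf L = ⊥ := by
        rw [hV', inf_assoc, ← hinfA, hbot]
      have hdep' : ∀ w : Fin (s + 1) → H, (∀ i, w i ∈ V') → ¬ LinearIndependent Λ w := by
        intro w hw hind
        have hdep2 := hdep (Fin.cons v w) (fun i => by
          refine Fin.cases ?_ ?_ i
          · simpa using hvV
          · intro k; simpa using (hw k).1)
        rw [Fintype.not_linearIndependent_iff] at hdep2
        obtain ⟨c, hsum, i, hi⟩ := hdep2
        rw [Fin.sum_univ_succ] at hsum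
        simp only [Fin.cons_zero, Fin.cons_succ] at hsum
        by_cases hc0 : c 0 = 0
        · rw [hc0, zero_smul, zero_add] at hsum
          have hall := Fintype.linearIndependent_iff.mp hind (fun k => c k.succ) hsum
          refine hi ?_
          refine Fin.cases hc0 (fun k => hall k) i
        · have hmem : c 0 • v ∈ L j := by
            have : c 0 • v = -∑ k : Fin (s + 1), c k.succ • w k := by
              rw [eq_neg_iff_add_eq_zero]; exact hsum
            rw [this]
            exact (L j).neg_mem (Submodule.sum_mem _ (fun k _ => (L j).smul_mem _ (hw k).2))
          exact hjv (hsat j (c 0) hc0 v hmem)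
      obtain ⟨I', hI'A', hI'card, hI'bot⟩ :=
        ih A' hcardA' V' (le_trans inf_le_left hVW) hdep' hbot'
      refine ⟨insert j I', ?_, ?_, ?_⟩
      · intro x hx
        rcases Finset.mem_insert.mp hx with h | h
        · exact h ▸ hjA
        · exact Finset.mem_of_mem_erase (hI'A' h)
      · rw [Finset.card_insert_of_notMem (fun h => (Finset.notMem_erase j A) (hI'A' h)),
          hI'card]
      · rw [Finset.inf_insert, ← inf_assoc, ← hV', hI'bot]

/-- Lemma 3.16 (module-theoretic content): if `K₁, …, K_g` are submodules of `H` with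
`⋂ᵢ Kᵢ = 0` and `W ⊆ H` is a torsion-free submodule generated by at most `s ≤ g` elements,
then there is a subset `I` of size `s` with `W ∩ ⋂_{i∈I} Kᵢ = 0`. -/
theorem stmt_15 (Λ : Type*) [CommRing Λ] [IsDomain Λ]
    (H : Type*) [AddCommGroup H] [Module Λ H]
    (g : ℕ) (hg : 1 ≤ g) (K : Fin g → Submodule Λ H)
    (hK : (⨅ i, K i) = ⊥)
    (W : Submodule Λ H)
    (hWtf : ∀ r : Λ, r ≠ 0 → ∀ w ∈ W, r • w = 0 → w = 0)
    (s : ℕ) (hs1 : 1 ≤ s) (hsg : s ≤ g)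
    (f : Fin s → H) (hW : W = Submodule.span Λ (Set.range f)) :
    ∃ I : Finset (Fin g), I.card = s ∧ W ⊓ (⨅ i ∈ I, K i) = ⊥ := by
  set L : Fin g → Submodule Λ H := fun i => satSub Λ (K i) with hL
  have hKL : ∀ i, K i ≤ L i := fun i h hh => ⟨1, one_ne_zero, by simpa using hh⟩
  have hsat : ∀ i, ∀ a : Λ, a ≠ 0 → ∀ h : H, a • h ∈ L i → h ∈ L i := by
    rintro i a ha h ⟨b, hb, hbh⟩
    exact ⟨b * a, mul_ne_zero hb ha, by rwa [mul_smul]⟩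
  -- W ⊓ inf of saturations = ⊥
  have hbot : W ⊓ Finset.univ.inf L = ⊥ := by
    rw [eq_bot_iff]
    rintro w ⟨hwW, hwL⟩
    have hwL : w ∈ Finset.univ.inf L := hwL
    rw [Submodule.mem_finsetInf] at hwL
    have hch : ∀ i : Fin g, ∃ a : Λ, a ≠ 0 ∧ a • w ∈ K i := fun i =>
      hwL i (Finset.mem_univ i)
    choose a ha haK using hch
    have hane : (∏ i, a i) ≠ 0 := Finset.prod_ne_zero_iff.mpr (fun i _ => ha i)
    have hmem : ∀ i, (∏ j, a j) • w ∈ K i := by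
      intro i
      rw [← Finset.mul_prod_erase Finset.univ a (Finset.mem_univ i), mul_comm, mul_smul]
      exact (K i).smul_mem _ (haK i)
    have : (∏ i, a i) • w ∈ (⨅ i, K i) := Submodule.mem_iInf _ |>.mpr hmem
    rw [hK, Submodule.mem_bot] at this
    have := hWtf _ hane w hwW this
    simp [this]
  -- every s+1 elements of W are dependent
  have hdep : ∀ w : Fin (s + 1) → H, (∀ i, w i ∈ W) → ¬ LinearIndependent Λ w := by
    intro w hw hind
    haveI : Fintype ↥(Set.range f) :=
      @Fintype.ofFinite _ (Set.finite_range f).to_subtype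
    have hle : Set.range w ≤ Submodule.span Λ (Set.range f) := by
      rintro x ⟨i, rfl⟩
      rw [← hW]; exact hw i
    have h1 := linearIndependent_le_span' w hind (Set.range f) hle
    have h2 : Fintype.card ↥(Set.range f) ≤ s := by
      simpa using Fintype.card_range_le f
    rw [Cardinal.mk_fin, Nat.cast_le] at h1
    omega
  obtain ⟨I, _, hIcard, hIbot⟩ :=
    key_induction Λ H g L W hWtf hsat s Finset.univ
      (by simpa using hsg) W le_rfl hdep hbot
  refine ⟨I, hIcard, ?_⟩
  rw [eq_bot_iff, ← hIbot]
  refine inf_le_inf_left W ?_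
  rw [← Finset.inf_eq_iInf]
  exact Finset.inf_mono_fun (fun i _ => hKL i)
end
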